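/- Discretization of errors: let P be a d×d complex orthogonal projection matrix (P† = P, P² = P), let (E_j)_{j∈J} be a finite family of d×d complex matrices with Σ_j E_j† E_j = I, and let (R_i)_{i∈K} be a finite family of d×d complex matrices with Σ_i R_i† R_i = I such that Σ_{i,j} R_i E_j ρ E_j† R_i† = ρ for every d×d complex matrix ρ with P ρ P = ρ. Suppose (F_k)_{k∈L} is another finite family with Σ_k F_k† F_k = I whose members are linear combinations of the E_j, i.e. F_k = Σ_j ξ_{kj} E_j for complex numbers ξ_{kj}. Then the same recovery corrects the new noise process: Σ_{i,k} R_i F_k ρ F_k† R_i† = ρ for every d×d complex matrix ρ with P ρ P = ρ. -/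

import Mathlib

open Matrix

/-- **Discretization of errors**: if the recovery family `(R_i)` corrects the noise process
with Kraus family `(E_j)` on the code given by the projector `P`, and `(F_k)` is another
trace-preserving Kraus family whose members are linear combinations of the `E_j`, then the
same recovery corrects the noise process `(F_k)`:
`Σ_{i,k} R_i F_k ρ F_k† R_i† = ρ` for every `ρ` with `PρP = ρ`. -/

noncomputable def fip {n : Type} [Fintype n] (Z W : Matrix n n ℂ) : ℂ :=
  ∑ p, ∑ y, (starRingEnd ℂ) (Z p y) * W p y

lemma fip_self_eq_zero {n : Type} [Fintype n] {Z : Matrix n n ℂ} (h : fip Z Z = 0) :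
    Z = 0 := by
  unfold fip at h
  have h2 : ∑ p, ∑ y, (Complex.normSq (Z p y) : ℂ) = 0 := by
    simp only [Complex.normSq_eq_conj_mul_self]
    exact h
  have h3 : ∑ p, ∑ y, Complex.normSq (Z p y) = 0 := by
    exact_mod_cast h2
  ext p y
  have hnn : ∀ p ∈ Finset.univ, (0:ℝ) ≤ ∑ y, Complex.normSq (Z p y) :=
    fun p _ => Finset.sum_nonneg (fun y _ => Complex.normSq_nonneg _)
  have h4 := (Finset.sum_eq_zero_iff_of_nonneg hnn).mp h3 p (Finset.mem_univ p)
  have h5 := (Finset.sum_eq_zero_iff_of_nonneg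
    (fun y _ => Complex.normSq_nonneg (Z p y))).mp h4 y (Finset.mem_univ y)
  simpa using Complex.normSq_eq_zero.mp h5

lemma fip_sub_left {n : Type} [Fintype n] (X Y W : Matrix n n ℂ) (c : ℂ) :
    fip (X - c • Y) W = fip X W - (starRingEnd ℂ) c * fip Y W := by
  unfold fip
  simp only [Finset.mul_sum, ← Finset.sum_sub_distrib]
  congr 1; ext p; congr 1; ext y
  simp [Matrix.sub_apply, Matrix.smul_apply]
  ring

lemma fip_sub_right {n : Type} [Fintype n] (X Y W : Matrix n n ℂ) (c : ℂ) :
    fip W (X - c • Y) = fip W X - c * fip W Y := by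
  unfold fip
  simp only [Finset.mul_sum, ← Finset.sum_sub_distrib]
  congr 1; ext p; congr 1; ext y
  simp [Matrix.sub_apply, Matrix.smul_apply]
  ring

lemma fip_conj {n : Type} [Fintype n] (X Y : Matrix n n ℂ) :
    (starRingEnd ℂ) (fip X Y) = fip Y X := by
  unfold fip
  simp only [map_sum, _root_.map_mul, Complex.conj_conj]
  congr 1; ext p; congr 1; ext y
  ring

lemma key_scalar {n ι : Type} [Fintype n] [DecidableEq n] [Fintype ι]
    (P : Matrix n n ℂ) (B : ι → Matrix n n ℂ)
    (hB : ∀ σ : Matrix n n ℂ, ∑ a, B a * σ * (B a)ᴴ = P * σ * Pᴴ) :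
    ∀ a, ∃ μ : ℂ, B a = μ • P := by
  have hpt : ∀ p y q x, ∑ a, B a p y * (starRingEnd ℂ) (B a q x)
      = P p y * (starRingEnd ℂ) (P q x) := by
    intro p y q x
    have h := congrFun (congrFun (hB (Matrix.single y x (1:ℂ))) p) q
    have sand : ∀ C : Matrix n n ℂ,
        (C * Matrix.single y x (1:ℂ) * Cᴴ) p q = C p y * (starRingEnd ℂ) (C q x) := by
      intro C
      simp [mul_apply, Matrix.single, conjTranspose_apply, ite_and, mul_comm]
    simpa [Matrix.sum_apply, sand] using h
  have hquad : ∀ Z : Matrix n n ℂ,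
      ∑ a, fip Z (B a) * (starRingEnd ℂ) (fip Z (B a))
        = fip Z P * (starRingEnd ℂ) (fip Z P) := by
    intro Z
    have expand : ∀ W : Matrix n n ℂ, fip Z W * (starRingEnd ℂ) (fip Z W)
        = ∑ p, ∑ y, ∑ q, ∑ x, ((starRingEnd ℂ) (Z q x) * Z p y)
            * (W q x * (starRingEnd ℂ) (W p y)) := by
      intro W
      unfold fip
      simp only [map_sum, Finset.sum_mul, Finset.mul_sum, _root_.map_mul]
      congr 1; ext p; congr 1; ext y; congr 1; ext q; congr 1; ext x
      simp only [Complex.conj_conj]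
      ring
    simp only [expand]
    rw [Finset.sum_comm]
    congr 1; ext p
    rw [Finset.sum_comm]
    congr 1; ext y
    rw [Finset.sum_comm]
    congr 1; ext q
    rw [Finset.sum_comm]
    congr 1; ext x
    rw [← Finset.mul_sum, hpt q x p y]
  -- orthogonality: if fip Z P = 0 then fip Z (B a) = 0 for each a
  have horth : ∀ Z : Matrix n n ℂ, fip Z P = 0 → ∀ a, fip Z (B a) = 0 := by
    intro Z hZ a
    have h := hquad Z
    rw [hZ] at h
    simp only [zero_mul] at h
    have h2 : ∑ a, Complex.normSq (fip Z (B a)) = 0 := by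
      have h3 : ∑ a, (Complex.normSq (fip Z (B a)) : ℂ) = 0 := by
        simp only [Complex.mul_conj] at h
        exact h
      exact_mod_cast h3
    have := (Finset.sum_eq_zero_iff_of_nonneg
      (fun a _ => Complex.normSq_nonneg _)).mp h2 a (Finset.mem_univ a)
    exact Complex.normSq_eq_zero.mp this
  intro a
  by_cases hP0 : P = 0
  · refine ⟨0, ?_⟩
    have h := hpt
    have hz : fip (B a) P = 0 := by unfold fip; simp [hP0]
    have := horth (B a) hz a
    have hBa := fip_self_eq_zero this
    simp [hBa, hP0]
  · -- fip P P ≠ 0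
    have hPP : fip P P ≠ 0 := by
      intro h; exact hP0 (fip_self_eq_zero h)
    refine ⟨fip P (B a) / fip P P, ?_⟩
    set μ : ℂ := fip P (B a) / fip P P with hμ
    have hZP : fip (B a - μ • P) P = 0 := by
      rw [fip_sub_left]
      have hc : (starRingEnd ℂ) μ = fip (B a) P / fip P P := by
        rw [hμ, map_div₀, fip_conj, fip_conj]
      rw [hc]
      field_simp
      ring
    have hZB : fip (B a - μ • P) (B a) = 0 := horth _ hZP a
    have hZZ : fip (B a - μ • P) (B a - μ • P) = 0 := by
      rw [fip_sub_right, hZB, hZP]; ring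
    have h0 := fip_self_eq_zero hZZ
    exact sub_eq_zero.mp h0

theorem discretization_of_errors {d : ℕ} {J K L : Type}
    [Fintype J] [Fintype K] [Fintype L]
    (P : Matrix (Fin d) (Fin d) ℂ) (hP₁ : Pᴴ = P) (hP₂ : P * P = P)
    (E : J → Matrix (Fin d) (Fin d) ℂ) (hE : ∑ j, (E j)ᴴ * E j = 1)
    (R : K → Matrix (Fin d) (Fin d) ℂ) (hR : ∑ i, (R i)ᴴ * R i = 1)
    (hcorr : ∀ ρ : Matrix (Fin d) (Fin d) ℂ, P * ρ * P = ρ →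
      ∑ i, ∑ j, R i * E j * ρ * (E j)ᴴ * (R i)ᴴ = ρ)
    (F : L → Matrix (Fin d) (Fin d) ℂ) (hF : ∑ k, (F k)ᴴ * F k = 1)
    (ξ : L → J → ℂ) (hξ : ∀ k, F k = ∑ j, ξ k j • E j) :
    ∀ ρ : Matrix (Fin d) (Fin d) ℂ, P * ρ * P = ρ →
      ∑ i, ∑ k, R i * F k * ρ * (F k)ᴴ * (R i)ᴴ = ρ := by
  -- Step 1: package hcorr as a statement about B a = R i * E j * P
  have hB : ∀ σ : Matrix (Fin d) (Fin d) ℂ,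
      ∑ a : K × J, (R a.1 * E a.2 * P) * σ * (R a.1 * E a.2 * P)ᴴ = P * σ * Pᴴ := by
    intro σ
    have h1 : P * (P * σ * P) * P = P * σ * P := by
      rw [show P * (P * σ * P) * P = (P * P) * σ * (P * P) by noncomm_ring, hP₂]
    have h2 := hcorr (P * σ * P) h1
    rw [Fintype.sum_prod_type]
    calc ∑ i, ∑ j, (R i * E j * P) * σ * (R i * E j * P)ᴴ
        = ∑ i, ∑ j, R i * E j * (P * σ * P) * (E j)ᴴ * (R i)ᴴ := by
          apply Finset.sum_congr rfl; intro i _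
          apply Finset.sum_congr rfl; intro j _
          rw [conjTranspose_mul, conjTranspose_mul, hP₁]
          noncomm_ring
      _ = P * σ * P := h2
      _ = P * σ * Pᴴ := by rw [hP₁]
  have hms := key_scalar P (fun a : K × J => R a.1 * E a.2 * P) hB
  choose μ hμ using hms
  have hμ' : ∀ (i : K) (j : J), R i * E j * P = μ (i, j) • P := fun i j => hμ (i, j)
  -- Step 3: R i * F k * P is a multiple of P
  set ν : K → L → ℂ := fun i k => ∑ j, ξ k j * μ (i, j) with hν
  have hRFP : ∀ i k, R i * F k * P = ν i k • P := by
    intro i k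
    rw [hξ k]
    rw [Finset.mul_sum, Finset.sum_mul]
    calc ∑ j, R i * (ξ k j • E j) * P
        = ∑ j, ξ k j • (R i * E j * P) := by
          apply Finset.sum_congr rfl; intro j _
          rw [mul_smul_comm, smul_mul_assoc]
      _ = ∑ j, ξ k j • (μ (i, j) • P) := by
          apply Finset.sum_congr rfl; intro j _
          rw [hμ' i j]
      _ = (∑ j, ξ k j * μ (i, j)) • P := by
          rw [Finset.sum_smul]
          apply Finset.sum_congr rfl; intro j _
          rw [smul_smul]
  -- Step 4: the scalar sums to give s • P = P
  have hsP : (∑ i, ∑ k, ν i k * (starRingEnd ℂ) (ν i k)) • P = P := by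
    have hT : ∀ k, ∑ i, (R i * F k * P)ᴴ * (R i * F k * P) = Pᴴ * (F k)ᴴ * F k * P := by
      intro k
      calc ∑ i, (R i * F k * P)ᴴ * (R i * F k * P)
          = ∑ i, (Pᴴ * (F k)ᴴ) * ((R i)ᴴ * R i) * (F k * P) := by
            apply Finset.sum_congr rfl; intro i _
            rw [conjTranspose_mul, conjTranspose_mul]
            noncomm_ring
        _ = (Pᴴ * (F k)ᴴ) * (∑ i, (R i)ᴴ * R i) * (F k * P) := by
            rw [Finset.mul_sum, Finset.sum_mul]
        _ = Pᴴ * (F k)ᴴ * F k * P := by rw [hR]; noncomm_ring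
    have hT2 : ∑ k, ∑ i, (R i * F k * P)ᴴ * (R i * F k * P) = P := by
      calc ∑ k, ∑ i, (R i * F k * P)ᴴ * (R i * F k * P)
          = ∑ k, Pᴴ * (F k)ᴴ * F k * P := Finset.sum_congr rfl (fun k _ => hT k)
        _ = Pᴴ * (∑ k, (F k)ᴴ * F k) * P := by
            rw [Finset.mul_sum, Finset.sum_mul]
            apply Finset.sum_congr rfl; intro k _; noncomm_ring
        _ = P := by rw [hF, hP₁, mul_one, hP₂]
    have hT3 : ∑ k, ∑ i, (R i * F k * P)ᴴ * (R i * F k * P)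
        = (∑ i, ∑ k, ν i k * (starRingEnd ℂ) (ν i k)) • P := by
      rw [Finset.sum_comm]
      rw [Finset.sum_smul]
      apply Finset.sum_congr rfl; intro i _
      rw [Finset.sum_smul]
      apply Finset.sum_congr rfl; intro k _
      rw [hRFP i k, conjTranspose_smul, smul_mul_assoc, mul_smul_comm, smul_smul,
        hP₁, hP₂, starRingEnd_apply, mul_comm]
    rw [← hT3, hT2]
  -- Step 5: conclude
  intro ρ hρ
  have hterm : ∀ i k, R i * F k * ρ * (F k)ᴴ * (R i)ᴴ
      = (ν i k * (starRingEnd ℂ) (ν i k)) • ρ := by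
    intro i k
    have e1 : R i * F k * ρ * (F k)ᴴ * (R i)ᴴ
        = (R i * F k * P) * ρ * (R i * F k * P)ᴴ := by
      rw [conjTranspose_mul, conjTranspose_mul, hP₁]
      nth_rewrite 1 [← hρ]
      noncomm_ring
    rw [e1, hRFP i k, conjTranspose_smul, hP₁, smul_mul_assoc, smul_mul_assoc,
      mul_smul_comm, smul_smul]
    rw [hρ, starRingEnd_apply]
  calc ∑ i, ∑ k, R i * F k * ρ * (F k)ᴴ * (R i)ᴴ
      = ∑ i, ∑ k, (ν i k * (starRingEnd ℂ) (ν i k)) • ρ := by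
        apply Finset.sum_congr rfl; intro i _
        exact Finset.sum_congr rfl (fun k _ => hterm i k)
    _ = (∑ i, ∑ k, ν i k * (starRingEnd ℂ) (ν i k)) • ρ := by
        rw [Finset.sum_smul]
        exact Finset.sum_congr rfl (fun i _ => (Finset.sum_smul).symm)
    _ = ρ := by
        nth_rewrite 1 [← hρ]
        rw [← smul_mul_assoc, ← smul_mul_assoc, hsP, hρ]
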